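/- For negative β (β = −|β|), the function ψ_x(p) = B · exp(−i x m artanh(p√|β|/m)/(ħ√|β|)) / √(m² − |β|p²) on the interval (−m/√|β|, m/√|β|) is not square-integrable: ∫ |ψ_x(p)|² dp = ∞ for any B ≠ 0. -/

import Mathlib

open Real Complex MeasureTheory

noncomputable def artanh (x : ℝ) : ℝ := (1 / 2) * Real.log ((1 + x) / (1 - x))

lemma key_inv_lintegral (a : ℝ) (ha : 0 < a) :
    ∫⁻ x in Set.Ioo (0:ℝ) a, ENNReal.ofReal (a - x)⁻¹ = ⊤ := by
  by_contra h
  have hm : AEStronglyMeasurable (fun x => (a - x)⁻¹)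
      (volume.restrict (Set.Ioo (0:ℝ) a)) :=
    ((measurable_const.sub measurable_id).inv).aestronglyMeasurable
  have hnn : 0 ≤ᵐ[volume.restrict (Set.Ioo (0:ℝ) a)] fun x => (a - x)⁻¹ := by
    filter_upwards [ae_restrict_mem measurableSet_Ioo] with x hx
    exact inv_nonneg.2 (sub_nonneg.2 hx.2.le)
  have hint : IntegrableOn (fun x => (a - x)⁻¹) (Set.Ioo 0 a) :=
    (lintegral_ofReal_ne_top_iff_integrable hm hnn).1 h
  have hIoc : IntegrableOn (fun x => (a - x)⁻¹) (Set.Ioc 0 a) := by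
    rwa [IntegrableOn, ← Measure.restrict_congr_set Ioo_ae_eq_Ioc]
  have hII : IntervalIntegrable (fun x => (a - x)⁻¹) volume 0 a :=
    (intervalIntegrable_iff_integrableOn_Ioc_of_le ha.le).2 hIoc
  have hII' : IntervalIntegrable (fun x => (x - a)⁻¹) volume 0 a := by
    have := hII.neg
    have he : (-fun x : ℝ => (a - x)⁻¹) = fun x => (x - a)⁻¹ := by
      funext x; rw [Pi.neg_apply, ← inv_neg, neg_sub]
    rwa [he] at this
  rw [intervalIntegrable_sub_inv_iff] at hII'
  rcases hII' with h1 | h2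
  · exact ha.ne h1
  · exact h2 Set.right_mem_uIcc

/-- for negative β (with `b = |β| > 0`), the position eigenfunction
`ψ_x(p) = B exp(−i x m artanh(p√b/m)/(hbar√b)) / √(m² − b p²)` on
`I = (−m/√b, m/√b)` is not square integrable: `∫_I |ψ_x|² dp = ∞` for `B ≠ 0`. -/
theorem eigenfunction_not_square_integrable_negative_beta
    (hbar m b x : ℝ) (hhbar : 0 < hbar) (hm : 0 < m) (hb : 0 < b)
    (B : ℂ) (hB : B ≠ 0)
    (ψ : ℝ → ℂ)
    (hψ : ∀ p : ℝ, ψ p =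
      B * Complex.exp (-Complex.I * x * m *
          (_root_.artanh (p * Real.sqrt b / m)) / (hbar * Real.sqrt b)) /
        (Real.sqrt (m ^ 2 - b * p ^ 2) : ℂ)) :
    ∫⁻ p in Set.Ioo (-(m / Real.sqrt b)) (m / Real.sqrt b),
      (‖ψ p‖₊ : ENNReal) ^ 2 = ⊤ := by
  set sb := Real.sqrt b with hsbdef
  have hsb : 0 < sb := Real.sqrt_pos.2 hb
  have hsb2 : sb ^ 2 = b := Real.sq_sqrt hb.le
  set a := m / sb with hadef
  have ha : 0 < a := div_pos hm hsb
  have hma : m = a * sb := by rw [hadef, div_mul_cancel₀ m hsb.ne']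
  set c : ℝ := ‖B‖ ^ 2 / (2 * m * sb) with hcdef
  have hc : 0 < c := by
    exact div_pos (pow_pos (norm_pos_iff.2 hB) 2) (by positivity)
  -- positivity of the denominator on the interval
  have hD : ∀ p ∈ Set.Ioo (-a) a, 0 < m ^ 2 - b * p ^ 2 := by
    intro p hp
    have h1 : p ^ 2 < a ^ 2 := by nlinarith [hp.1, hp.2]
    nlinarith [hsb2, hma]
  -- norm of ψ
  have hnorm : ∀ p ∈ Set.Ioo (-a) a, ‖ψ p‖ = ‖B‖ / Real.sqrt (m ^ 2 - b * p ^ 2) := by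
    intro p hp
    rw [hψ p, norm_div, norm_mul]
    have hexp : ‖Complex.exp (-Complex.I * x * m *
        (_root_.artanh (p * sb / m)) / (hbar * sb))‖ = 1 := by
      rw [Complex.norm_exp]
      have hre : ((-Complex.I * x * m * (_root_.artanh (p * sb / m)) / (hbar * sb))).re = 0 := by
        simp [Complex.div_re, Complex.mul_re, Complex.mul_im]
      rw [hre, Real.exp_zero]
    rw [hexp, mul_one]
    congr 1
    rw [Complex.norm_real, Real.norm_eq_abs, _root_.abs_of_nonneg (Real.sqrt_nonneg _)]
  -- pointwise lower bound on (0, a)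
  have hpt : ∀ p ∈ Set.Ioo (0:ℝ) a,
      ENNReal.ofReal c * ENNReal.ofReal (a - p)⁻¹ ≤ (‖ψ p‖₊ : ENNReal) ^ 2 := by
    intro p hp
    have hp' : p ∈ Set.Ioo (-a) a := ⟨by linarith [hp.1], hp.2⟩
    have hDp := hD p hp'
    have hsq : (‖ψ p‖₊ : ENNReal) ^ 2 = ENNReal.ofReal (‖B‖ ^ 2 / (m ^ 2 - b * p ^ 2)) := by
      rw [← enorm_eq_nnnorm, ← ofReal_norm, ← ENNReal.ofReal_pow (norm_nonneg _)]
      congr 1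
      rw [hnorm p hp', div_pow, Real.sq_sqrt hDp.le]
    rw [hsq, ← ENNReal.ofReal_mul hc.le]
    apply ENNReal.ofReal_le_ofReal
    have hap : 0 < a - p := by linarith [hp.2]
    have hkey : m ^ 2 - b * p ^ 2 ≤ 2 * m * sb * (a - p) := by
      have h2 : 2 * m * sb * (a - p) = 2 * m ^ 2 - 2 * m * sb * p := by
        rw [hadef]; field_simp
      rw [h2, ← hsb2]; nlinarith [sq_nonneg (m - sb * p)]
    have he : c * (a - p)⁻¹ = ‖B‖ ^ 2 / (2 * m * sb * (a - p)) := by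
      rw [hcdef, ← div_eq_mul_inv, div_div]
    rw [he]
    gcongr
  -- integral over (0, a) lower-bounds the whole integral
  have hsub : Set.Ioo (0:ℝ) a ⊆ Set.Ioo (-a) a :=
    Set.Ioo_subset_Ioo (by linarith) le_rfl
  rw [eq_top_iff]
  calc (⊤ : ENNReal) = ENNReal.ofReal c * ⊤ := by
        rw [ENNReal.mul_top (by simpa [ENNReal.ofReal_eq_zero] using not_le.2 hc)]
    _ = ENNReal.ofReal c * ∫⁻ p in Set.Ioo (0:ℝ) a, ENNReal.ofReal (a - p)⁻¹ := by
        rw [key_inv_lintegral a ha]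
    _ = ∫⁻ p in Set.Ioo (0:ℝ) a, ENNReal.ofReal c * ENNReal.ofReal (a - p)⁻¹ :=
        (lintegral_const_mul' _ _ ENNReal.ofReal_ne_top).symm
    _ ≤ ∫⁻ p in Set.Ioo (0:ℝ) a, (‖ψ p‖₊ : ENNReal) ^ 2 := by
        apply lintegral_mono_ae
        filter_upwards [ae_restrict_mem measurableSet_Ioo] with p hp
        exact hpt p hp
    _ ≤ ∫⁻ p in Set.Ioo (-a) a, (‖ψ p‖₊ : ENNReal) ^ 2 :=
        lintegral_mono_set hsub
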